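/- Assume K has symmetric support. For every o ∈ 𝒳 and every t ≥ diam(𝒳)/4, the Lipschitz norm of the log-density satisfies ‖log(P_t(o,·)/π(·))‖_Lip ≤ 3 log(e/δ), where δ is the smallest non-zero entry of K. -/

import Mathlib

open scoped Classical

noncomputable section

/-- `n`-th power of a kernel `K` on a finite set. -/
def matPow {X : Type*} [Fintype X] [DecidableEq X] (K : X → X → ℝ) : ℕ → X → X → ℝ
  | 0 => fun x y => if x = y then 1 else 0
  | n + 1 => fun x y => ∑ z, matPow K n x z * K z y

/-- `K` is a stochastic matrix with entries in `[0,1]` and rows summing to `1`. -/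
def IsStochastic {X : Type*} [Fintype X] (K : X → X → ℝ) : Prop :=
  (∀ x y, 0 ≤ K x y ∧ K x y ≤ 1) ∧ ∀ x, ∑ y, K x y = 1

/-- Irreducibility: any state can be reached from any state. -/
def IsIrreducibleMatrix {X : Type*} [Fintype X] [DecidableEq X] (K : X → X → ℝ) : Prop :=
  ∀ x y, ∃ n : ℕ, 0 < matPow K n x y

/-- `π` is the (positive) stationary probability vector of `K`. -/
def IsStationaryProb {X : Type*} [Fintype X] (K : X → X → ℝ) (π : X → ℝ) : Prop :=
  (∀ x, 0 < π x) ∧ (∑ x, π x = 1) ∧ ∀ y, ∑ x, π x * K x y = π y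

/-- A probability vector on a finite set. -/
def IsProbVector {X : Type*} [Fintype X] (μ : X → ℝ) : Prop :=
  (∀ x, 0 ≤ μ x) ∧ ∑ x, μ x = 1

/-- Continuous-time heat kernel `P_t(x,y) = e^{-t} ∑ t^n/n! Kⁿ(x,y)`. -/
def heatKernel {X : Type*} [Fintype X] [DecidableEq X] (K : X → X → ℝ) (t : ℝ) (x y : X) : ℝ :=
  Real.exp (-t) * ∑' n : ℕ, t ^ n / (Nat.factorial n : ℝ) * matPow K n x y

/-- Total variation distance between two vectors. -/
def dTV {X : Type*} [Fintype X] (μ ν : X → ℝ) : ℝ := (∑ x, |μ x - ν x|) / 2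

/-- Relative entropy (Kullback–Leibler divergence). -/
def dKL {X : Type*} [Fintype X] (μ ν : X → ℝ) : ℝ := ∑ x, μ x * Real.log (μ x / ν x)

/-- Varentropy. -/
def varKL {X : Type*} [Fintype X] (μ ν : X → ℝ) : ℝ :=
  ∑ x, μ x * (Real.log (μ x / ν x) - dKL μ ν) ^ 2

/-- Worst-case total variation distance to equilibrium at time `t`. -/
def worstTV {X : Type*} [Fintype X] [DecidableEq X] (K : X → X → ℝ) (π : X → ℝ) (t : ℝ) : ℝ :=
  sSup {v : ℝ | ∃ o : X, v = dTV (heatKernel K t o) π}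

/-- Worst-case relative entropy to equilibrium at time `t`. -/
def worstKL {X : Type*} [Fintype X] [DecidableEq X] (K : X → X → ℝ) (π : X → ℝ) (t : ℝ) : ℝ :=
  sSup {v : ℝ | ∃ o : X, v = dKL (heatKernel K t o) π}

/-- Worst-case varentropy at time `t`. -/
def worstVar {X : Type*} [Fintype X] [DecidableEq X] (K : X → X → ℝ) (π : X → ℝ) (t : ℝ) : ℝ :=
  sSup {v : ℝ | ∃ o : X, v = varKL (heatKernel K t o) π}

/-- Mixing time: first time the worst-case TV distance drops below `ε`. -/
def mixingTime {X : Type*} [Fintype X] [DecidableEq X] (K : X → X → ℝ) (π : X → ℝ) (ε : ℝ) : ℝ :=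
  sInf {t : ℝ | 0 ≤ t ∧ worstTV K π t ≤ ε}

/-- Variance of `f` with respect to `π`. -/
def varPi {X : Type*} [Fintype X] (π f : X → ℝ) : ℝ :=
  ∑ x, π x * (f x - ∑ y, π y * f y) ^ 2

/-- Poincaré constant: the largest `γ` with `γ·Var_π(f) ≤ (1/2)∑ π(x)K(x,y)(f(x)-f(y))²`. -/
def poincare {X : Type*} [Fintype X] (K : X → X → ℝ) (π : X → ℝ) : ℝ :=
  sSup {γ : ℝ | ∀ f : X → ℝ, γ * varPi π f ≤ (∑ x, ∑ y, π x * K x y * (f x - f y) ^ 2) / 2}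

/-- Smallest non-zero entry of `K`. -/
def minEntry {X : Type*} [Fintype X] (K : X → X → ℝ) : ℝ :=
  sInf {v : ℝ | (∃ x y, v = K x y) ∧ 0 < v}

/-- Smallest stationary probability `p = min_x π(x)`. -/
def statMin {X : Type*} [Fintype X] (π : X → ℝ) : ℝ :=
  sInf {v : ℝ | ∃ x, v = π x}

/-- The support of `K` is symmetric. -/
def SymmSupport {X : Type*} (K : X → X → ℝ) : Prop :=
  ∀ x y, 0 < K x y → 0 < K y x

/-- Graph distance associated with the support of `K`. -/
def mdist {X : Type*} [Fintype X] [DecidableEq X] (K : X → X → ℝ) (x y : X) : ℕ :=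
  sInf {n : ℕ | 0 < matPow K n x y}

/-- Diameter of the state space for the distance `mdist`. -/
def mdiam {X : Type*} [Fintype X] [DecidableEq X] (K : X → X → ℝ) : ℕ :=
  Finset.sup Finset.univ fun p : X × X => mdist K p.1 p.2

/-- Lipschitz norm of `f` with respect to `mdist`. -/
def lipNorm {X : Type*} [Fintype X] [DecidableEq X] (K : X → X → ℝ) (f : X → ℝ) : ℝ :=
  sSup {v : ℝ | ∃ x y, x ≠ y ∧ v = |f x - f y| / (mdist K x y : ℝ)}

section Aux
set_option linter.unusedSectionVars false
set_option linter.unusedVariables false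
variable {X : Type*} [Fintype X] [DecidableEq X] (K : X → X → ℝ)

lemma matPow_nonneg (hK : IsStochastic K) (n : ℕ) (x y : X) : 0 ≤ matPow K n x y := by
  induction n generalizing x y with
  | zero => simp only [matPow]; split <;> norm_num
  | succ n ih =>
    exact Finset.sum_nonneg fun z _ => mul_nonneg (ih x z) (hK.1 z y).1

lemma matPow_rowsum (hK : IsStochastic K) (n : ℕ) (x : X) : ∑ y, matPow K n x y = 1 := by
  induction n generalizing x with
  | zero => simp [matPow]
  | succ n ih =>
    simp only [matPow]
    rw [Finset.sum_comm]
    have : ∀ z ∈ Finset.univ, ∑ y, matPow K n x z * K z y = matPow K n x z := by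
      intro z _
      rw [← Finset.mul_sum, hK.2 z, mul_one]
    rw [Finset.sum_congr rfl this, ih x]

lemma matPow_le_one (hK : IsStochastic K) (n : ℕ) (x y : X) : matPow K n x y ≤ 1 := by
  calc matPow K n x y ≤ ∑ y', matPow K n x y' :=
        Finset.single_le_sum (fun z _ => matPow_nonneg K hK n x z) (Finset.mem_univ y)
    _ = 1 := matPow_rowsum K hK n x

lemma le_matPow_succ (hK : IsStochastic K) (n : ℕ) (o z z' : X) :
    matPow K n o z * K z z' ≤ matPow K (n + 1) o z' :=
  Finset.single_le_sum (f := fun w => matPow K n o w * K w z')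
    (fun w _ => mul_nonneg (matPow_nonneg K hK n o w) (hK.1 w z').1) (Finset.mem_univ z)

lemma exists_of_matPow_succ_pos (hK : IsStochastic K) {n : ℕ} {x y : X}
    (h : 0 < matPow K (n + 1) x y) : ∃ z, 0 < matPow K n x z ∧ 0 < K z y := by
  have h' : ∑ z : X, (0 : ℝ) < ∑ z : X, matPow K n x z * K z y := by simpa [matPow] using h
  obtain ⟨z, _, hz⟩ := Finset.exists_lt_of_sum_lt h'
  have h1 : 0 ≤ matPow K n x z := matPow_nonneg K hK n x z
  have h2 : 0 ≤ K z y := (hK.1 z y).1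
  rcases mul_pos_iff.mp hz with ⟨ha, hb⟩ | ⟨ha, hb⟩
  · exact ⟨z, ha, hb⟩
  · linarith

lemma matPow_succ' (n : ℕ) (x y : X) :
    matPow K (n + 1) x y = ∑ z, K x z * matPow K n z y := by
  induction n generalizing x y with
  | zero => simp [matPow]
  | succ n ih =>
    show ∑ z, matPow K (n + 1) x z * K z y = _
    calc ∑ z, matPow K (n + 1) x z * K z y
        = ∑ z, (∑ w, K x w * matPow K n w z) * K z y := by
          refine Finset.sum_congr rfl fun z _ => by rw [ih]
      _ = ∑ w, K x w * ∑ z, matPow K n w z * K z y := by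
          simp only [Finset.sum_mul, Finset.mul_sum]
          rw [Finset.sum_comm]
          exact Finset.sum_congr rfl fun w _ => Finset.sum_congr rfl fun z _ => by ring
      _ = ∑ w, K x w * matPow K (n + 1) w y := rfl

lemma exists_of_matPow_succ_pos' (hK : IsStochastic K) {n : ℕ} {x y : X}
    (h : 0 < matPow K (n + 1) x y) : ∃ z, 0 < K x z ∧ 0 < matPow K n z y := by
  rw [matPow_succ'] at h
  have h' : ∑ z : X, (0 : ℝ) < ∑ z : X, K x z * matPow K n z y := by simpa using h
  obtain ⟨z, _, hz⟩ := Finset.exists_lt_of_sum_lt h'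
  have h1 : 0 ≤ K x z := (hK.1 x z).1
  have h2 : 0 ≤ matPow K n z y := matPow_nonneg K hK n z y
  rcases mul_pos_iff.mp hz with ⟨ha, hb⟩ | ⟨ha, hb⟩
  · exact ⟨z, ha, hb⟩
  · linarith

lemma matPow_symm_pos (hK : IsStochastic K) (hsym : SymmSupport K) {n : ℕ} {x y : X}
    (h : 0 < matPow K n x y) : 0 < matPow K n y x := by
  induction n generalizing x y with
  | zero =>
    simp only [matPow] at h ⊢
    split at h
    · next heq => subst heq; simp
    · norm_num at h
  | succ n ih =>
    obtain ⟨z, hxz, hzy⟩ := exists_of_matPow_succ_pos' K hK h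
    have h1 : 0 < matPow K n y z := ih hzy
    have h2 : 0 < K z x := hsym x z hxz
    calc (0:ℝ) < matPow K n y z * K z x := mul_pos h1 h2
      _ ≤ matPow K (n+1) y x := le_matPow_succ K hK n y z x

end Aux

section Aux2
set_option linter.unusedSectionVars false
set_option linter.unusedVariables false
variable {X : Type*} [Fintype X] [DecidableEq X] (K : X → X → ℝ)

lemma minEntry_spec (hK : IsStochastic K) [Nonempty X] :
    (0 < minEntry K ∧ minEntry K ≤ 1) ∧ ∀ x y, 0 < K x y → minEntry K ≤ K x y := by
  classical
  set S : Set ℝ := {v : ℝ | (∃ x y, v = K x y) ∧ 0 < v} with hS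
  have hfin : S.Finite := by
    have : S ⊆ Set.range (fun p : X × X => K p.1 p.2) := by
      rintro v ⟨⟨x, y, rfl⟩, -⟩
      exact ⟨(x, y), rfl⟩
    exact (Set.finite_range _).subset this
  have hne : S.Nonempty := by
    obtain ⟨x⟩ := (inferInstance : Nonempty X)
    have hsum : ∑ y, K x y = 1 := hK.2 x
    have : ∃ y, 0 < K x y := by
      by_contra hcon
      push_neg at hcon
      have : ∑ y, K x y ≤ 0 := Finset.sum_nonpos fun y _ => hcon y
      linarith
    obtain ⟨y, hy⟩ := this
    exact ⟨K x y, ⟨x, y, rfl⟩, hy⟩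
  have hmem : minEntry K ∈ S := Set.Nonempty.csInf_mem hne hfin
  obtain ⟨⟨x0, y0, heq⟩, hpos⟩ := hmem
  refine ⟨⟨hpos, ?_⟩, ?_⟩
  · rw [heq]; exact (hK.1 x0 y0).2
  · intro x y hxy
    exact csInf_le hfin.bddBelow ⟨⟨x, y, rfl⟩, hxy⟩

lemma matPow_pos_ge (hK : IsStochastic K) [Nonempty X] {n : ℕ} {x y : X}
    (h : 0 < matPow K n x y) : minEntry K ^ n ≤ matPow K n x y := by
  induction n generalizing y with
  | zero =>
    simp only [matPow] at h ⊢
    split at h <;> simp_all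
  | succ n ih =>
    obtain ⟨z, h1, h2⟩ := exists_of_matPow_succ_pos K hK h
    have hδ := (minEntry_spec K hK).2 z y h2
    have hδpos := (minEntry_spec K hK).1.1
    calc minEntry K ^ (n + 1) = minEntry K ^ n * minEntry K := by ring
      _ ≤ matPow K n x z * K z y := by
          exact mul_le_mul (ih h1) hδ (le_of_lt hδpos) (matPow_nonneg K hK n x z)
      _ ≤ matPow K (n + 1) x y := le_matPow_succ K hK n x z y

lemma stationary_matPow (hK : IsStochastic K) {π : X → ℝ} (hπ : IsStationaryProb K π)
    (n : ℕ) (y : X) : ∑ x, π x * matPow K n x y = π y := by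
  induction n generalizing y with
  | zero =>
    simp only [matPow]
    rw [Finset.sum_eq_single y]
    · simp
    · intro b _ hb
      simp [hb]
    · simp
  | succ n ih =>
    simp only [matPow, Finset.mul_sum]
    rw [Finset.sum_comm]
    calc ∑ z, ∑ x, π x * (matPow K n x z * K z y)
        = ∑ z, (∑ x, π x * matPow K n x z) * K z y := by
          refine Finset.sum_congr rfl fun z _ => ?_
          rw [Finset.sum_mul]
          exact Finset.sum_congr rfl fun x _ => by ring
      _ = ∑ z, π z * K z y := by
          refine Finset.sum_congr rfl fun z _ => by rw [ih]
      _ = π y := hπ.2.2 y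

lemma mdist_pow_pos (hirr : IsIrreducibleMatrix K) (x y : X) :
    0 < matPow K (mdist K x y) x y :=
  Nat.sInf_mem (hirr x y)

lemma mdist_le_mdiam (x y : X) : mdist K x y ≤ mdiam K :=
  Finset.le_sup (f := fun p : X × X => mdist K p.1 p.2) (Finset.mem_univ (x, y))

lemma one_le_mdist (hirr : IsIrreducibleMatrix K) {x y : X} (hxy : x ≠ y) :
    1 ≤ mdist K x y := by
  rcases Nat.eq_zero_or_pos (mdist K x y) with h | h
  · exfalso
    have := mdist_pow_pos K hirr x y
    rw [h] at this
    simp only [matPow] at this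
    rw [if_neg hxy] at this
    exact lt_irrefl 0 this
  · exact h

lemma one_le_mdiam (hirr : IsIrreducibleMatrix K) (hcard : 2 ≤ Fintype.card X) :
    1 ≤ mdiam K := by
  obtain ⟨x, y, hxy⟩ := Fintype.exists_pair_of_one_lt_card (α := X) (by omega)
  exact le_trans (one_le_mdist K hirr hxy) (mdist_le_mdiam K x y)

lemma mdist_symm_le (hK : IsStochastic K) (hsym : SymmSupport K) (hirr : IsIrreducibleMatrix K)
    (x y : X) : mdist K y x ≤ mdist K x y :=
  Nat.sInf_le (matPow_symm_pos K hK hsym (mdist_pow_pos K hirr x y))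

lemma pi_ratio (hK : IsStochastic K) {π : X → ℝ} (hπ : IsStationaryProb K π) [Nonempty X]
    {n : ℕ} {x y : X} (h : 0 < matPow K n x y) : minEntry K ^ n * π x ≤ π y := by
  have h1 : minEntry K ^ n * π x ≤ matPow K n x y * π x :=
    mul_le_mul_of_nonneg_right (matPow_pos_ge K hK h) (le_of_lt (hπ.1 x))
  have h2 : π x * matPow K n x y ≤ ∑ z, π z * matPow K n z y :=
    Finset.single_le_sum (f := fun z => π z * matPow K n z y)
      (fun z _ => mul_nonneg (le_of_lt (hπ.1 z)) (matPow_nonneg K hK n z y))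
      (Finset.mem_univ x)
  rw [stationary_matPow K hK hπ n y] at h2
  linarith [h1, h2, mul_comm (π x) (matPow K n x y)]

end Aux2

section Aux3
set_option linter.unusedSectionVars false
set_option linter.unusedVariables false

/-- `t^M / M! ≤ (e t / M)^M` -/
lemma pow_div_factorial_le (t : ℝ) (ht : 0 ≤ t) {M : ℕ} (hM : 0 < M) :
    t ^ M / (M.factorial : ℝ) ≤ (Real.exp 1 * t / (M : ℝ)) ^ M := by
  have hMpos : (0:ℝ) < (M:ℝ) := by exact_mod_cast hM
  have hfac : (0:ℝ) < (M.factorial : ℝ) := by exact_mod_cast M.factorial_pos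
  have key : (M:ℝ) ^ M ≤ (M.factorial : ℝ) * Real.exp 1 ^ M := by
    have h1 : (M:ℝ) ^ M / (M.factorial : ℝ) ≤ Real.exp (M : ℝ) := by
      calc (M:ℝ) ^ M / (M.factorial : ℝ)
          ≤ ∑ i ∈ Finset.range (M+1), (M:ℝ) ^ i / (i.factorial : ℝ) := by
            refine Finset.single_le_sum (f := fun i => (M:ℝ)^i/(i.factorial:ℝ)) ?_ ?_
            · intro i _
              positivity
            · exact Finset.self_mem_range_succ M
        _ ≤ Real.exp (M:ℝ) := Real.sum_le_exp_of_nonneg (le_of_lt hMpos) (M+1)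
    have h2 : Real.exp (M:ℝ) = Real.exp 1 ^ M := by
      rw [← Real.exp_nat_mul]; norm_num
    rw [div_le_iff₀ hfac] at h1
    calc (M:ℝ)^M ≤ Real.exp (M:ℝ) * (M.factorial:ℝ) := h1
      _ = (M.factorial : ℝ) * Real.exp 1 ^ M := by rw [h2]; ring
  have expand : (Real.exp 1 * t / (M:ℝ)) ^ M = Real.exp 1 ^ M * t ^ M / (M:ℝ) ^ M := by
    rw [div_pow, mul_pow]
  rw [expand, div_le_div_iff₀ hfac (by positivity)]
  calc t ^ M * (M:ℝ) ^ M ≤ t ^ M * ((M.factorial:ℝ) * Real.exp 1 ^ M) := by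
        exact mul_le_mul_of_nonneg_left key (by positivity)
    _ = Real.exp 1 ^ M * t ^ M * (M.factorial:ℝ) := by ring

/-- geometric tail bound -/
lemma tail_le (t : ℝ) (ht : 0 < t) {M : ℕ} (hM : 15 * t ≤ (M:ℝ)) :
    ∑' i : ℕ, t ^ (i + M) / (((i + M).factorial : ℕ) : ℝ)
      ≤ (15/14) * (t ^ M / (M.factorial : ℝ)) := by
  have hMpos : (0:ℝ) < (M:ℝ) := lt_of_lt_of_le (by linarith) hM
  have hfac : (0:ℝ) < (M.factorial : ℝ) := by exact_mod_cast M.factorial_pos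
  have hr0 : 0 ≤ t / (M:ℝ) := by positivity
  have hr1 : t / (M:ℝ) ≤ 1/15 := by
    rw [div_le_iff₀ hMpos]; linarith
  have hterm : ∀ i : ℕ, t ^ (i + M) / (((i + M).factorial : ℕ) : ℝ)
      ≤ t ^ M / (M.factorial : ℝ) * (t / (M:ℝ)) ^ i := by
    intro i
    have hfacs : (M.factorial : ℝ) * (M:ℝ) ^ i ≤ (((i + M).factorial : ℕ) : ℝ) := by
      have h1 : M.factorial * M ^ i ≤ M.factorial * (M+1) ^ i :=
        Nat.mul_le_mul_left _ (Nat.pow_le_pow_left (Nat.le_succ M) i)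
      have h2 : M.factorial * (M+1) ^ i ≤ (M + i).factorial := Nat.factorial_mul_pow_le_factorial
      have := le_trans h1 h2
      have hcomm : (M + i).factorial = (i + M).factorial := by rw [Nat.add_comm]
      rw [hcomm] at this
      exact_mod_cast this
    have hpos2 : (0:ℝ) < (M.factorial : ℝ) * (M:ℝ) ^ i := by positivity
    calc t ^ (i + M) / (((i + M).factorial : ℕ) : ℝ)
        ≤ t ^ (i + M) / ((M.factorial : ℝ) * (M:ℝ) ^ i) := by
          apply div_le_div_of_nonneg_left (by positivity) hpos2 hfacs
      _ = t ^ M / (M.factorial : ℝ) * (t / (M:ℝ)) ^ i := by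
          rw [pow_add, div_pow]
          field_simp
  have hsum : Summable (fun i : ℕ => t ^ M / (M.factorial : ℝ) * (t / (M:ℝ)) ^ i) :=
    (summable_geometric_of_lt_one hr0 (by linarith)).mul_left _
  have hsum2 : Summable (fun i : ℕ => t ^ (i + M) / (((i + M).factorial : ℕ) : ℝ)) := by
    refine Summable.of_nonneg_of_le (fun i => by positivity) hterm hsum
  calc ∑' i : ℕ, t ^ (i + M) / (((i + M).factorial : ℕ) : ℝ)
      ≤ ∑' i : ℕ, t ^ M / (M.factorial : ℝ) * (t / (M:ℝ)) ^ i := Summable.tsum_le_tsum hterm hsum2 hsum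
    _ = t ^ M / (M.factorial : ℝ) * (1 - t/(M:ℝ))⁻¹ := by
        rw [tsum_mul_left, tsum_geometric_of_lt_one hr0 (by linarith)]
    _ ≤ t ^ M / (M.factorial : ℝ) * (15/14) := by
        apply mul_le_mul_of_nonneg_left _ (by positivity)
        rw [inv_le_comm₀ (by linarith) (by norm_num)]
        linarith
    _ = (15/14) * (t ^ M / (M.factorial : ℝ)) := by ring

end Aux3

section Aux4
set_option linter.unusedSectionVars false
set_option linter.unusedVariables false

lemma core_numeric {t δ : ℝ} (ht : 1/4 ≤ t) (hδ0 : 0 < δ) (hδ1 : δ ≤ 1)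
    {M : ℕ} (hM1 : 15 * t / δ ≤ (M:ℝ)) :
    (15/14) * (Real.exp 1 * t / (M : ℝ)) ^ M
      ≤ (1/25) * Real.exp (-(4*t) * Real.log (4/δ)) := by
  have htpos : (0:ℝ) < t := by linarith
  have hs : (0:ℝ) < 15 * t / δ := by positivity
  have hMpos : (0:ℝ) < (M:ℝ) := by linarith
  have hetM : 0 < Real.exp 1 * t / (M:ℝ) := by positivity
  have he9 := Real.exp_one_lt_d9
  have he9' := Real.exp_one_gt_d9
  set L : ℝ := Real.log (4/δ) with hL
  have hlog4 : (1:ℝ) ≤ Real.log 4 := by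
    rw [← Real.log_exp 1]
    exact Real.log_le_log (Real.exp_pos 1) (by linarith)
  have hL4 : Real.log 4 ≤ L := by
    rw [hL]
    apply Real.log_le_log (by norm_num)
    rw [le_div_iff₀ hδ0]; nlinarith
  have hLpos : (0:ℝ) < L := by linarith
  -- step 1 : (e t / M)^M ≤ exp (-(15 t) * L)
  have hstep1 : (Real.exp 1 * t / (M : ℝ)) ^ M ≤ Real.exp (-(15*t) * L) := by
    have hpoweq : (Real.exp 1 * t / (M : ℝ)) ^ M
        = Real.exp ((M:ℝ) * Real.log (Real.exp 1 * t / (M:ℝ))) := by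
      rw [Real.exp_nat_mul, Real.exp_log hetM]
    have hlogneg : Real.log (Real.exp 1 * t / (M:ℝ)) = - Real.log ((M:ℝ) / (Real.exp 1 * t)) := by
      rw [Real.log_div (by positivity) (by positivity), Real.log_div (by positivity) (by positivity)]
      ring
    rw [hpoweq, hlogneg, Real.exp_le_exp]
    have hkey : 15 * t * L ≤ (M:ℝ) * Real.log ((M:ℝ) / (Real.exp 1 * t)) := by
      have c1 : L ≤ Real.log ((15 * t / δ) / (Real.exp 1 * t)) := by
        have heq : (15 * t / δ) / (Real.exp 1 * t) = 15 / (Real.exp 1 * δ) := by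
          field_simp
        rw [heq, hL]
        apply Real.log_le_log (by positivity)
        rw [div_le_div_iff₀ hδ0 (by positivity)]
        nlinarith
      have c2 : Real.log ((15 * t / δ) / (Real.exp 1 * t)) ≤ Real.log ((M:ℝ) / (Real.exp 1 * t)) := by
        apply Real.log_le_log (by positivity)
        exact div_le_div_of_nonneg_right hM1 (by positivity)
      have c3 : 15 * t ≤ 15 * t / δ := by
        rw [le_div_iff₀ hδ0]; nlinarith
      calc 15 * t * L ≤ (15 * t / δ) * L := by nlinarith
        _ ≤ (15 * t / δ) * Real.log ((M:ℝ) / (Real.exp 1 * t)) := by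
            have := le_trans c1 c2
            nlinarith
        _ ≤ (M:ℝ) * Real.log ((M:ℝ) / (Real.exp 1 * t)) := by
            have hlogM : 0 ≤ Real.log ((M:ℝ) / (Real.exp 1 * t)) := le_trans (le_of_lt hLpos) (le_trans c1 c2)
            nlinarith
    linarith
  -- step 2 : (15/14) * exp(-(15t) L) ≤ (1/25) * exp(-(4t) L)
  have hstep2 : (15/14) * Real.exp (-(15*t) * L) ≤ (1/25) * Real.exp (-(4*t) * L) := by
    have h26 : Real.log (375/14) ≤ 11 * t * L := by
      have h1 : Real.log ((375/14:ℝ)^(4:ℕ)) ≤ Real.log ((4:ℝ)^(11:ℕ)) :=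
        Real.log_le_log (by positivity) (by norm_num)
      rw [Real.log_pow, Real.log_pow] at h1
      have h2 : Real.log (375/14) ≤ (11/4) * Real.log 4 := by push_cast at h1; linarith
      calc Real.log (375/14) ≤ (11/4) * Real.log 4 := h2
        _ ≤ (11/4) * L := by linarith
        _ ≤ 11 * t * L := by nlinarith
    have h3 : (375:ℝ)/14 ≤ Real.exp (11 * t * L) := by
      calc (375:ℝ)/14 = Real.exp (Real.log (375/14)) := by rw [Real.exp_log]; norm_num
        _ ≤ Real.exp (11 * t * L) := by rw [Real.exp_le_exp]; exact h26
    have hsplit : Real.exp (-(4*t) * L) = Real.exp (11 * t * L) * Real.exp (-(15*t) * L) := by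
      rw [← Real.exp_add]; ring_nf
    rw [hsplit]
    have hE : 0 < Real.exp (-(15*t)*L) := Real.exp_pos _
    nlinarith
  calc (15/14) * (Real.exp 1 * t / (M : ℝ)) ^ M ≤ (15/14) * Real.exp (-(15*t) * L) := by
        apply mul_le_mul_of_nonneg_left hstep1 (by norm_num)
    _ ≤ (1/25) * Real.exp (-(4*t) * L) := hstep2

/-- spine lower bound : exp(-(4t) log(4/δ)) ≤ t^r/r! * δ^r  when r ≤ 4t -/
lemma spine_lb {t δ : ℝ} (ht : 1/4 ≤ t) (hδ0 : 0 < δ) (hδ1 : δ ≤ 1)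
    {r : ℕ} (hr : (r:ℝ) ≤ 4 * t) :
    Real.exp (-(4*t) * Real.log (4/δ)) ≤ t ^ r / (r.factorial : ℝ) * δ ^ r := by
  have htpos : (0:ℝ) < t := by linarith
  have hLpos : (0:ℝ) ≤ Real.log (4/δ) := Real.log_nonneg (by rw [le_div_iff₀ hδ0]; nlinarith)
  rcases Nat.eq_zero_or_pos r with hr0 | hrpos
  · subst hr0
    have h1 : Real.exp (-(4*t) * Real.log (4/δ)) ≤ 1 := by
      rw [Real.exp_le_one_iff]; nlinarith
    simpa using h1
  · have hrR : (0:ℝ) < (r:ℝ) := by exact_mod_cast hrpos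
    have htδ : (0:ℝ) < t * δ := by positivity
    have hq : (0:ℝ) < t * δ / (r:ℝ) := by positivity
    have step1 : (t * δ / (r:ℝ)) ^ r ≤ t ^ r / (r.factorial : ℝ) * δ ^ r := by
      have hfact : (r.factorial : ℝ) ≤ (r:ℝ) ^ r := by exact_mod_cast Nat.factorial_le_pow r
      have hfp : (0:ℝ) < (r.factorial : ℝ) := by exact_mod_cast r.factorial_pos
      have heq : (t*δ/(r:ℝ))^r = (t^r * δ^r) / (r:ℝ)^r := by rw [div_pow, mul_pow]
      rw [heq]
      calc (t^r * δ^r) / (r:ℝ)^r ≤ (t^r * δ^r) / (r.factorial:ℝ) :=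
            div_le_div_of_nonneg_left (by positivity) hfp hfact
        _ = t ^ r / (r.factorial : ℝ) * δ ^ r := by ring
    have step2 : Real.exp (-(4*t) * Real.log (4/δ)) ≤ (t * δ / (r:ℝ)) ^ r := by
      have hpoweq : (t * δ / (r:ℝ)) ^ r = Real.exp ((r:ℝ) * Real.log (t * δ / (r:ℝ))) := by
        rw [Real.exp_nat_mul, Real.exp_log hq]
      rw [hpoweq, Real.exp_le_exp]
      have hlogneg : Real.log (t * δ / (r:ℝ)) = - Real.log ((r:ℝ) / (t * δ)) := by
        rw [Real.log_div (by positivity) (by positivity), Real.log_div (by positivity) (by positivity)]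
        ring
      rw [hlogneg]
      have goal : (r:ℝ) * Real.log ((r:ℝ) / (t * δ)) ≤ 4 * t * Real.log (4/δ) := by
        rcases le_or_gt (r:ℝ) (t*δ) with hc | hc
        · have : Real.log ((r:ℝ) / (t*δ)) ≤ 0 := by
            apply Real.log_nonpos (by positivity)
            rw [div_le_one htδ]; linarith
          nlinarith
        · have hlog1 : Real.log ((r:ℝ) / (t*δ)) ≤ Real.log (4/δ) := by
            have heq2 : (4*t) / (t*δ) = 4/δ := by field_simp
            rw [← heq2]
            apply Real.log_le_log (by positivity)
            exact div_le_div_of_nonneg_right hr htδ.le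
          have hlog0 : 0 ≤ Real.log ((r:ℝ) / (t*δ)) := by
            apply Real.log_nonneg
            rw [le_div_iff₀ htδ]; linarith
          nlinarith
      nlinarith
    exact le_trans step2 step1

end Aux4

section Aux5
set_option linter.unusedSectionVars false
set_option linter.unusedVariables false
variable {X : Type*} [Fintype X] [DecidableEq X]

def Fsum (K : X → X → ℝ) (t : ℝ) (o z : X) : ℝ :=
  ∑' n : ℕ, t ^ n / (Nat.factorial n : ℝ) * matPow K n o z

lemma Fsum_summable (K : X → X → ℝ) (hK : IsStochastic K) {t : ℝ} (ht : 0 ≤ t) (o z : X) :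
    Summable (fun n : ℕ => t ^ n / (Nat.factorial n : ℝ) * matPow K n o z) := by
  refine Summable.of_nonneg_of_le (fun n => ?_) (fun n => ?_) (Real.summable_pow_div_factorial t)
  · exact mul_nonneg (by positivity) (matPow_nonneg K hK n o z)
  · calc t ^ n / (Nat.factorial n : ℝ) * matPow K n o z
        ≤ t ^ n / (Nat.factorial n : ℝ) * 1 :=
          mul_le_mul_of_nonneg_left (matPow_le_one K hK n o z) (by positivity)
      _ = t ^ n / (Nat.factorial n : ℝ) := mul_one _

lemma Fsum_ge_term (K : X → X → ℝ) (hK : IsStochastic K) {t : ℝ} (ht : 0 ≤ t) (o z : X) (n : ℕ) :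
    t ^ n / (Nat.factorial n : ℝ) * matPow K n o z ≤ Fsum K t o z :=
  Summable.le_tsum (Fsum_summable K hK ht o z) n
    (fun j _ => mul_nonneg (by positivity) (matPow_nonneg K hK j o z))

lemma Fsum_nonneg (K : X → X → ℝ) (hK : IsStochastic K) {t : ℝ} (ht : 0 ≤ t) (o z : X) :
    0 ≤ Fsum K t o z :=
  tsum_nonneg (fun n => mul_nonneg (by positivity) (matPow_nonneg K hK n o z))

lemma Fsum_pos (K : X → X → ℝ) (hK : IsStochastic K) (hirr : IsIrreducibleMatrix K)
    {t : ℝ} (ht : 0 < t) (o z : X) : 0 < Fsum K t o z := by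
  have h := Fsum_ge_term K hK ht.le o z (mdist K o z)
  have hp := mdist_pow_pos K hirr o z
  have : 0 < t ^ (mdist K o z) / (Nat.factorial (mdist K o z) : ℝ) * matPow K (mdist K o z) o z := by
    apply mul_pos (by positivity) hp
  linarith

/-- The key one-step regularity estimate. -/
lemma step_lemma (K : X → X → ℝ) [Nonempty X] (hK : IsStochastic K)
    (hirr : IsIrreducibleMatrix K) {t : ℝ} (ht : 1/4 ≤ t)
    {o z z' : X} (hzz' : 0 < K z z') (hr : (mdist K o z : ℝ) ≤ 4 * t) :
    Fsum K t o z ≤ Real.exp 1 ^ 3 / minEntry K ^ 2 * Fsum K t o z' := by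
  have htpos : (0:ℝ) < t := by linarith
  set δ := minEntry K with hδ
  obtain ⟨⟨hδ0, hδ1⟩, hδle⟩ := minEntry_spec K hK
  have hδz : δ ≤ K z z' := hδle z z' hzz'
  set M : ℕ := ⌈15 * t / δ⌉₊ with hMdef
  have hM1 : 15 * t / δ ≤ (M:ℝ) := Nat.le_ceil _
  have hMpos : (0:ℝ) < (M:ℝ) := lt_of_lt_of_le (by positivity) hM1
  have hMnat : 0 < M := by exact_mod_cast hMpos
  have hM2 : (M:ℝ) ≤ 19 * t / δ := by
    have h1 : (M:ℝ) < 15 * t / δ + 1 := Nat.ceil_lt_add_one (by positivity)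
    have h2 : (1:ℝ) ≤ 4 * t / δ := by
      rw [le_div_iff₀ hδ0]; nlinarith
    have : 15 * t / δ + 4 * t / δ = 19 * t / δ := by ring
    linarith
  set g : ℕ → ℝ := fun n => t ^ n / (Nat.factorial n : ℝ) * matPow K n o z with hg
  set gb : ℕ → ℝ := fun n => t ^ n / (Nat.factorial n : ℝ) * matPow K n o z' with hgb
  have hgnn : ∀ n, 0 ≤ g n := fun n => mul_nonneg (by positivity) (matPow_nonneg K hK n o z)
  have hgbnn : ∀ n, 0 ≤ gb n := fun n => mul_nonneg (by positivity) (matPow_nonneg K hK n o z')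
  -- (1) Fsum z' ≥ δ * (t/M) * ∑_{m < M} g m
  have hA : δ * (t / (M:ℝ)) * ∑ m ∈ Finset.range M, g m ≤ Fsum K t o z' := by
    have h1 : ∑ n ∈ Finset.range (M+1), gb n ≤ Fsum K t o z' :=
      Summable.sum_le_tsum _ (fun i _ => hgbnn i) (Fsum_summable K hK htpos.le o z')
    have h2 : ∑ m ∈ Finset.range M, gb (m+1) ≤ ∑ n ∈ Finset.range (M+1), gb n := by
      rw [Finset.sum_range_succ']
      have := hgbnn 0
      linarith [hgbnn 0]
    have h3 : ∀ m ∈ Finset.range M, δ * (t / (M:ℝ)) * g m ≤ gb (m+1) := by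
      intro m hm
      have hmM : m + 1 ≤ M := Finset.mem_range.mp hm
      have hmMR : ((m:ℝ) + 1) ≤ (M:ℝ) := by exact_mod_cast hmM
      have hb : matPow K m o z * K z z' ≤ matPow K (m+1) o z' := le_matPow_succ K hK m o z z'
      have hbδ : δ * matPow K m o z ≤ matPow K (m+1) o z' := by
        have : δ * matPow K m o z ≤ matPow K m o z * K z z' := by
          have := matPow_nonneg K hK m o z
          nlinarith
        linarith
      have hfa : t ^ (m+1) / (Nat.factorial (m+1) : ℝ) ≥ (t / (M:ℝ)) * (t ^ m / (Nat.factorial m : ℝ)) := by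
        have hfeq : (Nat.factorial (m+1) : ℝ) = ((m:ℝ)+1) * (Nat.factorial m : ℝ) := by
          rw [Nat.factorial_succ]; push_cast; ring
        have heq2 : t ^ (m+1) / (Nat.factorial (m+1) : ℝ)
            = (t / ((m:ℝ)+1)) * (t ^ m / (Nat.factorial m : ℝ)) := by
          rw [hfeq, pow_succ]
          have hfp : ((Nat.factorial m : ℝ)) ≠ 0 := by positivity
          field_simp
        rw [heq2]
        apply mul_le_mul_of_nonneg_right _ (by positivity)
        exact div_le_div_of_nonneg_left htpos.le (by positivity) hmMR
      have hgb1 : gb (m+1) = t ^ (m+1) / (Nat.factorial (m+1) : ℝ) * matPow K (m+1) o z' := rfl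
      have hnn : 0 ≤ matPow K (m+1) o z' := matPow_nonneg K hK (m+1) o z'
      calc δ * (t / (M:ℝ)) * g m = (t / (M:ℝ)) * (t ^ m / (Nat.factorial m : ℝ)) * (δ * matPow K m o z) := by
            rw [hg]; ring
        _ ≤ (t / (M:ℝ)) * (t ^ m / (Nat.factorial m : ℝ)) * matPow K (m+1) o z' := by
            apply mul_le_mul_of_nonneg_left hbδ (by positivity)
        _ ≤ t ^ (m+1) / (Nat.factorial (m+1) : ℝ) * matPow K (m+1) o z' := by
            apply mul_le_mul_of_nonneg_right hfa hnn
        _ = gb (m+1) := rfl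
    calc δ * (t / (M:ℝ)) * ∑ m ∈ Finset.range M, g m
        = ∑ m ∈ Finset.range M, δ * (t / (M:ℝ)) * g m := by rw [Finset.mul_sum]
      _ ≤ ∑ m ∈ Finset.range M, gb (m+1) := Finset.sum_le_sum h3
      _ ≤ Fsum K t o z' := le_trans h2 h1
  -- (2) tail bound : Fsum z ≤ ∑_{m<M} g m + (1/25) * Fsum z
  have hTail : Fsum K t o z ≤ ∑ m ∈ Finset.range M, g m + (1/25) * Fsum K t o z := by
    have hsplit : ∑ m ∈ Finset.range M, g m + ∑' i : ℕ, g (i + M) = Fsum K t o z :=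
      Summable.sum_add_tsum_nat_add M (Fsum_summable K hK htpos.le o z)
    have htail1 : ∑' i : ℕ, g (i + M) ≤ ∑' i : ℕ, t ^ (i+M) / ((Nat.factorial (i+M) : ℕ) : ℝ) := by
      apply Summable.tsum_le_tsum
      · intro i
        calc g (i+M) ≤ t ^ (i+M) / ((Nat.factorial (i+M):ℕ) : ℝ) * 1 :=
              mul_le_mul_of_nonneg_left (matPow_le_one K hK _ o z) (by positivity)
          _ = t ^ (i+M) / ((Nat.factorial (i+M):ℕ) : ℝ) := mul_one _
      · exact (Fsum_summable K hK htpos.le o z).comp_injective (add_left_injective M)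
      · exact (Real.summable_pow_div_factorial t).comp_injective (add_left_injective M)
    have htail2 : ∑' i : ℕ, t ^ (i+M) / ((Nat.factorial (i+M):ℕ) : ℝ)
        ≤ (15/14) * (t ^ M / (Nat.factorial M : ℝ)) := by
      apply tail_le t htpos
      calc 15 * t ≤ 15 * t / δ := by
            rw [le_div_iff₀ hδ0]; nlinarith
        _ ≤ (M:ℝ) := hM1
    have htail3 : (15/14) * (t ^ M / (Nat.factorial M : ℝ)) ≤ (1/25) * Fsum K t o z := by
      have hc1 : (15/14) * (t ^ M / (Nat.factorial M : ℝ)) ≤ (15/14) * (Real.exp 1 * t / (M : ℝ)) ^ M :=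
        mul_le_mul_of_nonneg_left (pow_div_factorial_le t htpos.le hMnat) (by norm_num)
      have hc2 := core_numeric ht hδ0 hδ1 hM1
      have hc3 : Real.exp (-(4*t) * Real.log (4/δ)) ≤ Fsum K t o z := by
        have hs := spine_lb ht hδ0 hδ1 hr
        have hterm := Fsum_ge_term K hK htpos.le o z (mdist K o z)
        have hmp : δ ^ (mdist K o z) ≤ matPow K (mdist K o z) o z :=
          matPow_pos_ge K hK (mdist_pow_pos K hirr o z)
        have : t ^ (mdist K o z) / (Nat.factorial (mdist K o z) : ℝ) * δ ^ (mdist K o z)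
            ≤ t ^ (mdist K o z) / (Nat.factorial (mdist K o z) : ℝ) * matPow K (mdist K o z) o z :=
          mul_le_mul_of_nonneg_left hmp (by positivity)
        linarith
      calc (15/14) * (t ^ M / (Nat.factorial M : ℝ)) ≤ (15/14) * (Real.exp 1 * t / (M : ℝ)) ^ M := hc1
        _ ≤ (1/25) * Real.exp (-(4*t) * Real.log (4/δ)) := hc2
        _ ≤ (1/25) * Fsum K t o z := by linarith
    linarith
  -- combine
  have hFz : 0 ≤ Fsum K t o z := Fsum_nonneg K hK htpos.le o z
  have hsumlb : (24/25) * Fsum K t o z ≤ ∑ m ∈ Finset.range M, g m := by linarith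
  have hfrac : δ / 19 ≤ t / (M:ℝ) := by
    rw [div_le_div_iff₀ (by norm_num) hMpos]
    have h1 : δ * (M:ℝ) ≤ δ * (19 * t / δ) := by nlinarith
    have h2 : δ * (19 * t / δ) = 19 * t := by field_simp; exact div_self hδ0.ne'
    nlinarith
  have hcomb : δ * (δ/19) * ((24/25) * Fsum K t o z) ≤ Fsum K t o z' := by
    have hC : (0:ℝ) ≤ (24/25) * Fsum K t o z := by nlinarith
    have h2 := mul_le_mul_of_nonneg_left (mul_le_mul_of_nonneg_right hfrac hC) hδ0.le
    have e1 : δ * (δ/19) * ((24/25) * Fsum K t o z) = δ * (δ / 19 * ((24/25) * Fsum K t o z)) := by ring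
    have e2 : δ * (t / (M:ℝ) * ((24/25) * Fsum K t o z)) = δ * (t/(M:ℝ)) * ((24/25) * Fsum K t o z) := by ring
    calc δ * (δ/19) * ((24/25) * Fsum K t o z)
        ≤ δ * (t/(M:ℝ)) * ((24/25) * Fsum K t o z) := by rw [e1, ← e2]; exact h2
      _ ≤ δ * (t/(M:ℝ)) * ∑ m ∈ Finset.range M, g m := by
          apply mul_le_mul_of_nonneg_left hsumlb (by positivity)
      _ ≤ Fsum K t o z' := hA
  -- (475/24) ≤ e^3
  have he3 : (475:ℝ)/24 ≤ Real.exp 1 ^ 3 := by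
    have h := Real.exp_one_gt_d9
    have h2 : (2.7182818283:ℝ)^3 ≤ Real.exp 1 ^ 3 := by
      apply pow_le_pow_left₀ (by norm_num) h.le
    have h3 : (475:ℝ)/24 ≤ (2.7182818283:ℝ)^3 := by norm_num
    linarith
  have hfinal : Fsum K t o z ≤ (475/24) / δ^2 * Fsum K t o z' := by
    rw [div_mul_eq_mul_div, le_div_iff₀ (by positivity)]
    have h5 := mul_le_mul_of_nonneg_left hcomb (by norm_num : (0:ℝ) ≤ 475/24)
    calc Fsum K t o z * δ^2 = (475/24) * (δ*(δ/19)*((24/25)*Fsum K t o z)) := by ring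
      _ ≤ (475/24) * Fsum K t o z' := h5
  calc Fsum K t o z ≤ (475/24) / δ^2 * Fsum K t o z' := hfinal
    _ ≤ Real.exp 1 ^ 3 / δ ^ 2 * Fsum K t o z' := by
        apply mul_le_mul_of_nonneg_right _ (Fsum_nonneg K hK htpos.le o z')
        apply div_le_div_of_nonneg_right he3 (by positivity)

end Aux5

section Aux6
set_option linter.unusedSectionVars false
set_option linter.unusedVariables false
variable {X : Type*} [Fintype X] [DecidableEq X]

lemma chain_lemma (K : X → X → ℝ) [Nonempty X] (hK : IsStochastic K)
    (hirr : IsIrreducibleMatrix K) {t : ℝ} (ht : 1/4 ≤ t)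
    (hdiam : (mdiam K : ℝ) ≤ 4 * t) (o : X) :
    ∀ (n : ℕ) (x y : X), 0 < matPow K n x y →
      Fsum K t o x ≤ (Real.exp 1 ^ 3 / minEntry K ^ 2) ^ n * Fsum K t o y := by
  intro n
  induction n with
  | zero =>
    intro x y h
    simp only [matPow] at h
    split at h
    · next heq => subst heq; simp
    · norm_num at h
  | succ n ih =>
    intro x y h
    obtain ⟨w, h1, h2⟩ := exists_of_matPow_succ_pos K hK h
    have hrw : (mdist K o w : ℝ) ≤ 4 * t :=
      le_trans (by exact_mod_cast mdist_le_mdiam K o w) hdiam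
    have hstep := step_lemma K hK hirr ht h2 hrw
    have hCpos : (0:ℝ) ≤ Real.exp 1 ^ 3 / minEntry K ^ 2 := by
      have := (minEntry_spec K hK).1.1
      positivity
    calc Fsum K t o x ≤ (Real.exp 1 ^ 3 / minEntry K ^ 2) ^ n * Fsum K t o w := ih x w h1
      _ ≤ (Real.exp 1 ^ 3 / minEntry K ^ 2) ^ n *
            (Real.exp 1 ^ 3 / minEntry K ^ 2 * Fsum K t o y) := by
          apply mul_le_mul_of_nonneg_left hstep (pow_nonneg hCpos n)
      _ = (Real.exp 1 ^ 3 / minEntry K ^ 2) ^ (n+1) * Fsum K t o y := by ring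

lemma oneside (K : X → X → ℝ) [Nonempty X] (hK : IsStochastic K)
    (hirr : IsIrreducibleMatrix K) {π : X → ℝ} (hπ : IsStationaryProb K π)
    {t : ℝ} (ht : 1/4 ≤ t) (hdiam : (mdiam K : ℝ) ≤ 4 * t) (o x y : X) {d : ℕ}
    (hxy : 0 < matPow K d x y) (hyx : 0 < matPow K d y x) :
    Real.log (heatKernel K t o x / π x) - Real.log (heatKernel K t o y / π y)
      ≤ (3 * Real.log (Real.exp 1 / minEntry K)) * d := by
  have htpos : (0:ℝ) < t := by linarith
  obtain ⟨⟨hδ0, hδ1⟩, hδle⟩ := minEntry_spec K hK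
  set δ := minEntry K with hδdef
  have hFx : 0 < Fsum K t o x := Fsum_pos K hK hirr htpos o x
  have hFy : 0 < Fsum K t o y := Fsum_pos K hK hirr htpos o y
  have hπx : 0 < π x := hπ.1 x
  have hπy : 0 < π y := hπ.1 y
  have hheat : ∀ w : X, heatKernel K t o w = Real.exp (-t) * Fsum K t o w := fun w => rfl
  have hlog : ∀ w : X, 0 < Fsum K t o w → 0 < π w →
      Real.log (heatKernel K t o w / π w) = -t + Real.log (Fsum K t o w) - Real.log (π w) := by
    intro w hF hπw
    rw [hheat w, Real.log_div (by positivity) (by positivity),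
      Real.log_mul (by positivity) (by positivity), Real.log_exp]
  rw [hlog x hFx hπx, hlog y hFy hπy]
  -- bound log Fx - log Fy
  have hC : (0:ℝ) < Real.exp 1 ^ 3 / δ ^ 2 := by positivity
  have hchain := chain_lemma K hK hirr ht hdiam o d x y hxy
  have h1 : Real.log (Fsum K t o x) ≤ d * Real.log (Real.exp 1 ^ 3 / δ ^ 2) + Real.log (Fsum K t o y) := by
    calc Real.log (Fsum K t o x) ≤ Real.log ((Real.exp 1 ^ 3 / δ ^ 2) ^ d * Fsum K t o y) :=
          Real.log_le_log hFx hchain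
      _ = d * Real.log (Real.exp 1 ^ 3 / δ ^ 2) + Real.log (Fsum K t o y) := by
          rw [Real.log_mul (by positivity) (by positivity), Real.log_pow]
  -- bound log πy - log πx
  have h2 : Real.log (π y) - Real.log (π x) ≤ d * (- Real.log δ) := by
    have hpr := pi_ratio K hK hπ hyx
    have : Real.log (δ ^ d * π y) ≤ Real.log (π x) :=
      Real.log_le_log (by positivity) hpr
    rw [Real.log_mul (by positivity) (by positivity), Real.log_pow] at this
    linarith
  have h3 : Real.log (Real.exp 1 ^ 3 / δ ^ 2) = 3 - 2 * Real.log δ := by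
    rw [Real.log_div (by positivity) (by positivity), Real.log_pow, Real.log_pow, Real.log_exp]
    ring
  have h4 : Real.log (Real.exp 1 / δ) = 1 - Real.log δ := by
    rw [Real.log_div (by positivity) (by positivity), Real.log_exp]
  rw [h4]
  rw [h3] at h1
  nlinarith [h1, h2]

end Aux6


/-- Spatial regularity of the heat kernel. -/
theorem stmt_7 {X : Type*} [Fintype X] [DecidableEq X]
    (hcard : 2 ≤ Fintype.card X)
    (K : X → X → ℝ) (π : X → ℝ)
    (hK : IsStochastic K) (hirr : IsIrreducibleMatrix K) (hπ : IsStationaryProb K π)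
    (hsym : SymmSupport K)
    (o : X) (t : ℝ) (ht : (mdiam K : ℝ) / 4 ≤ t) :
    lipNorm K (fun x => Real.log (heatKernel K t o x / π x)) ≤
      3 * Real.log (Real.exp 1 / minEntry K) := by
  haveI : Nonempty X := Fintype.card_pos_iff.mp (by omega)
  obtain ⟨⟨hδ0, hδ1⟩, hδle⟩ := minEntry_spec K hK
  have hdiam1 : 1 ≤ mdiam K := one_le_mdiam K hirr hcard
  have hdiamR : (1:ℝ) ≤ (mdiam K : ℝ) := by exact_mod_cast hdiam1
  have ht4 : 1/4 ≤ t := by linarith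
  have hdiam : (mdiam K : ℝ) ≤ 4 * t := by linarith
  have he1 : (1:ℝ) ≤ Real.exp 1 := by
    have := Real.exp_one_gt_d9; linarith
  have hBnn : 0 ≤ 3 * Real.log (Real.exp 1 / minEntry K) := by
    have h1 : (1:ℝ) ≤ Real.exp 1 / minEntry K := by
      rw [le_div_iff₀ hδ0]; linarith
    have := Real.log_nonneg h1
    linarith
  apply Real.sSup_le _ hBnn
  rintro v ⟨x, y, hxy, rfl⟩
  have hd1 : 1 ≤ mdist K x y := one_le_mdist K hirr hxy
  have hdR : (0:ℝ) < (mdist K x y : ℝ) := by exact_mod_cast hd1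
  rw [div_le_iff₀ hdR]
  have hdxy : 0 < matPow K (mdist K x y) x y := mdist_pow_pos K hirr x y
  have hdsym : mdist K y x = mdist K x y :=
    le_antisymm (mdist_symm_le K hK hsym hirr x y) (mdist_symm_le K hK hsym hirr y x)
  have hdyx : 0 < matPow K (mdist K x y) y x := by
    have := mdist_pow_pos K hirr y x
    rwa [hdsym] at this
  rw [abs_sub_le_iff]
  constructor
  · exact oneside K hK hirr hπ ht4 hdiam o x y hdxy hdyx
  · have h := oneside K hK hirr hπ ht4 hdiam o y x hdyx hdxy
    exact h
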